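/- Let u and ρ be matrices each of rank at most 2κ. Then the difference u − ρ (which has rank at most 4κ) admits a decomposition u − ρ = u₁ + u₂ where u₁ and u₂ each have rank at most 2κ and are orthogonal with respect to the Hilbert–Schmidt (Frobenius) inner product; consequently ‖u₁‖_F + ‖u₂‖_F ≤ √2 · ‖u − ρ‖_F. -/

import Mathlib

open scoped ComplexConjugate

/-- Frobenius norm of a complex matrix. -/
noncomputable def frobNorm {n : ℕ} (A : Matrix (Fin n) (Fin n) ℂ) : ℝ :=
  Real.sqrt (∑ i, ∑ j, ‖A i j‖ ^ 2)

lemma matrix_rank_add_le {n : ℕ} (A B : Matrix (Fin n) (Fin n) ℂ) :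
    (A + B).rank ≤ A.rank + B.rank := by
  rw [Matrix.rank, Matrix.rank, Matrix.rank]
  have hle : LinearMap.range (A + B).mulVecLin ≤
      LinearMap.range A.mulVecLin ⊔ LinearMap.range B.mulVecLin := by
    rintro x ⟨y, rfl⟩
    rw [Matrix.mulVecLin_add]
    exact Submodule.add_mem_sup ⟨y, rfl⟩ ⟨y, rfl⟩
  exact (Submodule.finrank_mono hle).trans
    (Submodule.finrank_add_le_finrank_add_finrank _ _)

lemma frob_sq_trace {n : ℕ} (A : Matrix (Fin n) (Fin n) ℂ) :
    Matrix.trace (A.conjTranspose * A) = ((∑ i, ∑ j, ‖A i j‖ ^ 2 : ℝ) : ℂ) := by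
  rw [Matrix.trace]
  push_cast
  rw [Finset.sum_comm]
  refine Finset.sum_congr rfl fun j _ => ?_
  rw [Matrix.diag_apply, Matrix.mul_apply]
  refine Finset.sum_congr rfl fun i _ => ?_
  rw [Matrix.conjTranspose_apply]
  exact RCLike.conj_mul (A i j)

lemma sqrt_ineq (S₁ S₂ : ℝ) (h1 : 0 ≤ S₁) (h2 : 0 ≤ S₂) :
    Real.sqrt S₁ + Real.sqrt S₂ ≤ Real.sqrt 2 * Real.sqrt (S₁ + S₂) := by
  have e1 : Real.sqrt S₁ + Real.sqrt S₂
      = Real.sqrt ((Real.sqrt S₁ + Real.sqrt S₂) ^ 2) :=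
    (Real.sqrt_sq (by positivity)).symm
  rw [e1, ← Real.sqrt_mul (by norm_num : (0:ℝ) ≤ 2)]
  apply Real.sqrt_le_sqrt
  nlinarith [Real.sq_sqrt h1, Real.sq_sqrt h2, Real.sqrt_nonneg S₁,
    Real.sqrt_nonneg S₂, sq_nonneg (Real.sqrt S₁ - Real.sqrt S₂)]

lemma frob_ineq {n : ℕ} (A B C : Matrix (Fin n) (Fin n) ℂ)
    (h : (∑ i, ∑ j, ‖C i j‖ ^ 2 : ℝ)
      = (∑ i, ∑ j, ‖A i j‖ ^ 2) + (∑ i, ∑ j, ‖B i j‖ ^ 2)) :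
    frobNorm A + frobNorm B ≤ Real.sqrt 2 * frobNorm C := by
  have hS₁0 : (0:ℝ) ≤ ∑ i, ∑ j, ‖A i j‖ ^ 2 := Finset.sum_nonneg fun i _ =>
    Finset.sum_nonneg fun j _ => by positivity
  have hS₂0 : (0:ℝ) ≤ ∑ i, ∑ j, ‖B i j‖ ^ 2 := Finset.sum_nonneg fun i _ =>
    Finset.sum_nonneg fun j _ => by positivity
  simp only [frobNorm]
  rw [h]
  exact sqrt_ineq _ _ hS₁0 hS₂0

/-- Differences of rank-`2κ` matrices admit an orthogonal 2-term decomposition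
into rank-`2κ` matrices, with the `σ = √2` bound on the sum of Frobenius norms. -/
theorem lowrank_orthogonal_decomposition
    {n : ℕ} (κ : ℕ) (u ρ : Matrix (Fin n) (Fin n) ℂ)
    (hu : u.rank ≤ 2 * κ) (hρ : ρ.rank ≤ 2 * κ) :
    (u - ρ).rank ≤ 4 * κ ∧
    ∃ u₁ u₂ : Matrix (Fin n) (Fin n) ℂ,
      u - ρ = u₁ + u₂ ∧ u₁.rank ≤ 2 * κ ∧ u₂.rank ≤ 2 * κ ∧
      Matrix.trace (u₁.conjTranspose * u₂) = 0 ∧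
      frobNorm u₁ + frobNorm u₂ ≤ Real.sqrt 2 * frobNorm (u - ρ) := by
  classical
  set M : Matrix (Fin n) (Fin n) ℂ := u - ρ with hM
  -- the subspace: column space of u
  set K : Submodule ℂ (EuclideanSpace ℂ (Fin n)) :=
    LinearMap.range (Matrix.toEuclideanLin u) with hK
  set Pl : EuclideanSpace ℂ (Fin n) →ₗ[ℂ] EuclideanSpace ℂ (Fin n) :=
    ((K.subtypeL ∘L K.orthogonalProjectionOnto :
      EuclideanSpace ℂ (Fin n) →L[ℂ] EuclideanSpace ℂ (Fin n)) :
      EuclideanSpace ℂ (Fin n) →ₗ[ℂ] EuclideanSpace ℂ (Fin n)) with hPl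
  have hPl_apply : ∀ x, Pl x = (K.orthogonalProjectionOnto x : EuclideanSpace ℂ (Fin n)) :=
    fun x => rfl
  have hPl_mem : ∀ x, Pl x ∈ K := fun x => (K.orthogonalProjectionOnto x).2
  have hPl_fix : ∀ x, x ∈ K → Pl x = x := fun x hx =>
    Submodule.starProjection_eq_self_iff.mpr hx
  set P : Matrix (Fin n) (Fin n) ℂ := Matrix.toEuclideanLin.symm Pl with hPdef
  have hP : Matrix.toEuclideanLin P = Pl := Matrix.toEuclideanLin.apply_symm_apply Pl
  -- P is Hermitian
  have hPH : P.conjTranspose = P := by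
    refine Matrix.isHermitian_iff_isSymmetric.mpr ?_
    rw [hP]
    exact K.starProjection_isSymmetric
  have hmul : ∀ A B : Matrix (Fin n) (Fin n) ℂ,
      Matrix.toEuclideanLin (A * B) =
        (Matrix.toEuclideanLin A).comp (Matrix.toEuclideanLin B) := by
    intro A B
    rw [Matrix.toEuclideanLin_eq_toLin]
    exact Matrix.toLin_mul _ _ _ A B
  have hPP : P * P = P := by
    apply Matrix.toEuclideanLin.injective
    rw [hmul, hP]
    apply LinearMap.ext; intro x
    show Pl (Pl x) = Pl x
    exact hPl_fix _ (hPl_mem x)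
  have hPu : P * u = u := by
    apply Matrix.toEuclideanLin.injective
    rw [hmul, hP]
    apply LinearMap.ext; intro x
    show Pl (Matrix.toEuclideanLin u x) = Matrix.toEuclideanLin u x
    exact hPl_fix _ ⟨x, rfl⟩
  -- the decomposition
  set u₁ : Matrix (Fin n) (Fin n) ℂ := P * M with hu₁
  set u₂ : Matrix (Fin n) (Fin n) ℂ := M - P * M with hu₂
  have hsum : M = u₁ + u₂ := by rw [hu₁, hu₂]; abel
  -- rank of P
  have hrangePl : LinearMap.range Pl = K := by
    apply le_antisymm
    · rintro x ⟨y, rfl⟩; exact hPl_mem y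
    · intro y hy; exact ⟨y, hPl_fix y hy⟩
  have hrankP : P.rank = u.rank := by
    rw [Matrix.rank_eq_finrank_range_toLin P (PiLp.basisFun 2 ℂ (Fin n)) (PiLp.basisFun 2 ℂ (Fin n)),
      Matrix.rank_eq_finrank_range_toLin u (PiLp.basisFun 2 ℂ (Fin n)) (PiLp.basisFun 2 ℂ (Fin n))]
    rw [← Matrix.toEuclideanLin_eq_toLin] at *
    rw [hP, hrangePl, hK]
  have hranku₁ : u₁.rank ≤ 2 * κ := by
    calc u₁.rank ≤ P.rank := Matrix.rank_mul_le_left P M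
    _ = u.rank := hrankP
    _ ≤ 2 * κ := hu
  have hu₂alt : u₂ = (P - 1) * ρ := by
    rw [hu₂, hM, Matrix.mul_sub, hPu, Matrix.sub_mul, Matrix.one_mul]
    abel
  have hranku₂ : u₂.rank ≤ 2 * κ := by
    rw [hu₂alt]
    exact (Matrix.rank_mul_le_right (P - 1) ρ).trans hρ
  -- orthogonality
  have hP2 : P * (P * M) = P * M := by rw [← Matrix.mul_assoc, hPP]
  have h0 : u₁.conjTranspose * u₂ = 0 := by
    rw [hu₁, hu₂, Matrix.conjTranspose_mul, hPH, Matrix.mul_sub, Matrix.mul_assoc,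
      Matrix.mul_assoc, hP2, sub_self]
  have h0' : u₂.conjTranspose * u₁ = 0 := by
    have := congrArg Matrix.conjTranspose h0
    simpa [Matrix.conjTranspose_mul] using this
  -- Pythagoras
  have hpyth : (∑ i, ∑ j, ‖M i j‖ ^ 2 : ℝ)
      = (∑ i, ∑ j, ‖u₁ i j‖ ^ 2) + (∑ i, ∑ j, ‖u₂ i j‖ ^ 2) := by
    have ht : Matrix.trace (M.conjTranspose * M)
        = Matrix.trace (u₁.conjTranspose * u₁) + Matrix.trace (u₂.conjTranspose * u₂) := by
      rw [hsum]
      simp [Matrix.conjTranspose_add, Matrix.add_mul, Matrix.mul_add, h0, h0']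
    rw [frob_sq_trace M, frob_sq_trace u₁, frob_sq_trace u₂] at ht
    exact_mod_cast ht
  refine ⟨?_, u₁, u₂, hsum, hranku₁, hranku₂, by rw [h0, Matrix.trace_zero], ?_⟩
  · rw [hsum]
    calc (u₁ + u₂).rank ≤ u₁.rank + u₂.rank := matrix_rank_add_le u₁ u₂
    _ ≤ 2 * κ + 2 * κ := Nat.add_le_add hranku₁ hranku₂
    _ = 4 * κ := by ring
  · exact frob_ineq u₁ u₂ M hpyth
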